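/- Let X¹ = (X¹₁,…,X¹_d) be a strict row contraction of n₁×n₁ complex matrices and let X² = (X²₁,…,X²_d) be a row co-isometry of n₂×n₂ complex matrices such that the unital subalgebra of M_{n₂}(ℂ) generated by X²₁,…,X²_d is all of M_{n₂}(ℂ). Then the spectral radius of T = Σᵢ₌₁^d conj(X¹ᵢ) ⊗ X²ᵢ ∈ M_{n₁n₂}(ℂ) is strictly less than 1. -/

import Mathlib

/-!
Common definitions: the ψ-involution, `vec`, the elementary Pick matrix, the Choi matrix,
Kronecker-product helpers with right-associated index types, the boomerang matrices, the
commutation matrix, and the Moore–Penrose predicate.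
-/

open Matrix Filter
open scoped Kronecker Matrix.Norms.L2Operator ComplexOrder

noncomputable section

/-- Square `n × n` complex matrices. -/
abbrev Mat (n : ℕ) := Matrix (Fin n) (Fin n) ℂ

/-- Entrywise complex conjugate of a matrix. -/
def conjM {m k : Type*} (A : Matrix m k ℂ) : Matrix m k ℂ := A.map (starRingEnd ℂ)

/-- `vec A` stacks the columns of `A`: the slot `(j, i)` (column `j`, row `i`) holds `A i j`. -/
def vecM (n : ℕ) (A : Mat n) : Matrix (Fin n × Fin n) Unit ℂ := Matrix.of fun p _ => A p.2 p.1

/-- The `ψ`-involution on `M_{n²}(ℂ)`: the linear map determined on matrix units by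
`ψ(E_{ij} ⊗ E_{kℓ}) = E_{ℓj} ⊗ E_{ki}`, equivalently `ψ(A ⊗ B) = vec(B)·vec(A)ᵀ`. -/
def psi (n : ℕ) (U : Matrix (Fin n × Fin n) (Fin n × Fin n) ℂ) :
    Matrix (Fin n × Fin n) (Fin n × Fin n) ℂ :=
  Matrix.of fun p q => U (q.2, p.2) (q.1, p.1)

/-- `X` is a strict row contraction: `‖Σᵢ Xᵢ Xᵢ*‖ < 1` in the L² operator norm. -/
def StrictRowContraction {n : ℕ} {ι : Type*} [Fintype ι] (X : ι → Mat n) : Prop :=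
  ‖∑ i, X i * (X i)ᴴ‖ < 1

/-- The elementary Pick matrix `P_X = ψ((I_{n²} − Σᵢ conj(Xᵢ) ⊗ Xᵢ)⁻¹)`. -/
def pick {n : ℕ} {ι : Type*} [Fintype ι] (X : ι → Mat n) :
    Matrix (Fin n × Fin n) (Fin n × Fin n) ℂ :=
  psi n ((1 - ∑ i, conjM (X i) ⊗ₖ X i)⁻¹)

/-- The Choi matrix `𝔠_n = Σ_{i,j} E_{ij} ⊗ E_{ij} ∈ M_{n²}(ℂ)`. -/
def choiM (n : ℕ) : Matrix (Fin n × Fin n) (Fin n × Fin n) ℂ :=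
  ∑ i : Fin n, ∑ j : Fin n, Matrix.single i j (1 : ℂ) ⊗ₖ Matrix.single i j (1 : ℂ)

/-- `X^w = X_{i₁} ⋯ X_{i_k}` for a word `w = i₁⋯i_k` in the free monoid. -/
def wordProd {n : ℕ} {ι : Type*} (X : ι → Mat n) (w : List ι) : Mat n := (w.map X).prod

/-- Kronecker product `A ⊗ C` where `A` carries a product index, with the resulting
index types flattened right-associatively (`(a × b) × c ↦ a × (b × c)`). -/
def krA {a b c a' b' c' : Type*} (A : Matrix (a × b) (a' × b') ℂ) (C : Matrix c c' ℂ) :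
    Matrix (a × b × c) (a' × b' × c') ℂ :=
  Matrix.of fun p q => A (p.1, p.2.1) (q.1, q.2.1) * C p.2.2 q.2.2

/-- Kronecker product `M ⊗ C` where `M` carries a triple product index, flattened
right-associatively. -/
def krT {a b c e a' b' c' e' : Type*} (M : Matrix (a × b × c) (a' × b' × c') ℂ)
    (C : Matrix e e' ℂ) : Matrix (a × b × c × e) (a' × b' × c' × e') ℂ :=
  Matrix.of fun p q => M (p.1, p.2.1, p.2.2.1) (q.1, q.2.1, q.2.2.1) * C p.2.2.2 q.2.2.2

/-- Triple Kronecker product `A ⊗ B ⊗ C` with right-associated index types. -/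
def kr3 {a b c a' b' c' : Type*} (A : Matrix a a' ℂ) (B : Matrix b b' ℂ) (C : Matrix c c' ℂ) :
    Matrix (a × b × c) (a' × b' × c') ℂ :=
  Matrix.of fun p q => A p.1 q.1 * B p.2.1 q.2.1 * C p.2.2 q.2.2

/-- The boomerang matrix `B̆ = Σ_{i,j} e_i ⊗ e_j ⊗ E_{ij} ∈ M_{n³×n}(ℂ)`:
its entry at row `(i, j, k)`, column `ℓ` is `δ_{k i} δ_{ℓ j}`. -/
def boom (n : ℕ) : Matrix (Fin n × Fin n × Fin n) (Fin n) ℂ :=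
  Matrix.of fun p l => if p.2.2 = p.1 ∧ l = p.2.1 then 1 else 0

/-- The commutation (permutation) matrix `Q_{n,r}`, satisfying
`Q_{n,r} (U ⊗ V) Q_{n,r}ᵀ = V ⊗ U` for `U ∈ M_n`, `V ∈ M_r`. -/
def commMat (n r : ℕ) : Matrix (Fin r × Fin n) (Fin n × Fin r) ℂ :=
  Matrix.of fun p q => if p.2 = q.1 ∧ p.1 = q.2 then 1 else 0

/-- `Σ_{i,j} e_i ⊗ e_j ⊗ I_r ⊗ E_{ij}`: its entry at row `(i, j, a, k)`, column `(b, ℓ)`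
is `δ_{k i} δ_{ℓ j} δ_{a b}`. -/
def preBoom (n r : ℕ) : Matrix (Fin n × Fin n × Fin r × Fin n) (Fin r × Fin n) ℂ :=
  Matrix.of fun p q => if p.2.2.2 = p.1 ∧ q.2 = p.2.1 ∧ p.2.2.1 = q.1 then 1 else 0

/-- The ampliated boomerang matrix `B̆_r = (Σ_{i,j} e_i ⊗ e_j ⊗ I_r ⊗ E_{ij}) · Q_{n,r}`. -/
def boomAmp (n r : ℕ) : Matrix (Fin n × Fin n × Fin r × Fin n) (Fin n × Fin r) ℂ :=
  preBoom n r * commMat n r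

/-- `B` is the Moore–Penrose pseudoinverse of `A` (the four Penrose conditions). -/
structure IsMoorePenroseInv {m k : Type*} [Fintype m] [Fintype k]
    (A : Matrix m k ℂ) (B : Matrix k m ℂ) : Prop where
  mul_inv_mul : A * B * A = A
  inv_mul_inv : B * A * B = B
  hermitian_mul_inv : (A * B)ᴴ = A * B
  hermitian_inv_mul : (B * A)ᴴ = B * A

lemma psd_real_smul {m : Type*} [Fintype m] {M : Matrix m m ℂ} (h : M.PosSemidef)
    {r : ℝ} (hr : 0 ≤ r) : ((r : ℂ) • M).PosSemidef := by
  refine .of_dotProduct_mulVec_nonneg ?_ fun x => ?_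
  · unfold Matrix.IsHermitian
    rw [conjTranspose_smul, h.1]
    norm_num
  · rw [smul_mulVec, dotProduct_smul, smul_eq_mul]
    exact mul_nonneg (by exact_mod_cast hr) (h.dotProduct_mulVec_nonneg x)

lemma psd_sum {m ι : Type*} [Fintype m] [Fintype ι] {f : ι → Matrix m m ℂ}
    (h : ∀ i, (f i).PosSemidef) : (∑ i, f i).PosSemidef :=
  Finset.sum_induction f _ (fun _ _ ha hb => ha.add hb) Matrix.PosSemidef.zero (fun i _ => h i)

lemma psd_diag_nonneg {m : Type*} [Fintype m] [DecidableEq m] {M : Matrix m m ℂ}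
    (h : M.PosSemidef) (j : m) : 0 ≤ M j j := by
  simpa [dotProduct, Pi.single_apply, mulVec] using h.dotProduct_mulVec_nonneg (Pi.single j 1)

lemma dot_star_self {m : Type*} [Fintype m] (y : m → ℂ) :
    star y ⬝ᵥ y = ((∑ i, ‖y i‖ ^ 2 : ℝ) : ℂ) := by
  push_cast
  refine Finset.sum_congr rfl fun i _ => ?_
  simp [Complex.star_def, mul_comm, Complex.mul_conj', Complex.sq_norm]

/-- For any matrix `A`, `‖A Aᴴ‖ • 1 - A Aᴴ` is positive semidefinite. -/
lemma psd_norm_smul_one_sub {m k : Type*} [Fintype m] [Fintype k] [DecidableEq m] [DecidableEq k]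
    (A : Matrix m k ℂ) :
    (((‖A * Aᴴ‖ : ℝ) : ℂ) • 1 - A * Aᴴ).PosSemidef := by
  set c : ℝ := ‖A * Aᴴ‖ with hc
  refine .of_dotProduct_mulVec_nonneg ?_ fun x => ?_
  · unfold Matrix.IsHermitian
    rw [conjTranspose_sub, conjTranspose_smul, conjTranspose_mul, conjTranspose_conjTranspose,
      conjTranspose_one]
    norm_num
  · have hy : star x ⬝ᵥ ((A * Aᴴ) *ᵥ x) = star (Aᴴ *ᵥ x) ⬝ᵥ (Aᴴ *ᵥ x) := by
      rw [← mulVec_mulVec, dotProduct_mulVec, star_mulVec, conjTranspose_conjTranspose]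
    have hnorm : ∑ i, ‖(Aᴴ *ᵥ x) i‖ ^ 2 ≤ c * ∑ i, ‖x i‖ ^ 2 := by
      have hb := Matrix.l2_opNorm_mulVec Aᴴ ((WithLp.equiv 2 (m → ℂ)).symm x)
      have h1 : ‖(EuclideanSpace.equiv k ℂ).symm (Aᴴ *ᵥ (WithLp.equiv 2 (m → ℂ)).symm x)‖
          = Real.sqrt (∑ i, ‖(Aᴴ *ᵥ x) i‖ ^ 2) := by
        rw [EuclideanSpace.norm_eq]
        rfl
      have h2 : ‖(WithLp.equiv 2 (m → ℂ)).symm x‖ = Real.sqrt (∑ i, ‖x i‖ ^ 2) := by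
        rw [EuclideanSpace.norm_eq]
        rfl
      rw [h1, h2] at hb
      have hAA : ‖Aᴴ‖ * ‖Aᴴ‖ = c := by
        have := Matrix.l2_opNorm_conjTranspose_mul_self (Aᴴ)
        rw [conjTranspose_conjTranspose] at this
        exact this.symm
      have h3 : (Real.sqrt (∑ i, ‖(Aᴴ *ᵥ x) i‖ ^ 2)) ^ 2 ≤ (‖Aᴴ‖ * Real.sqrt (∑ i, ‖x i‖ ^ 2)) ^ 2 := by
        apply pow_le_pow_left₀ (Real.sqrt_nonneg _) hb
      rw [Real.sq_sqrt (by positivity)] at h3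
      calc ∑ i, ‖(Aᴴ *ᵥ x) i‖ ^ 2 ≤ (‖Aᴴ‖ * Real.sqrt (∑ i, ‖x i‖ ^ 2)) ^ 2 := h3
        _ = ‖Aᴴ‖ * ‖Aᴴ‖ * (Real.sqrt (∑ i, ‖x i‖ ^ 2))^2 := by ring
        _ = c * ∑ i, ‖x i‖ ^ 2 := by rw [hAA, Real.sq_sqrt (by positivity)]
    have : star x ⬝ᵥ (((c : ℂ) • 1 - A * Aᴴ) *ᵥ x)
        = ((c * ∑ i, ‖x i‖ ^ 2 - ∑ i, ‖(Aᴴ *ᵥ x) i‖ ^ 2 : ℝ) : ℂ) := by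
      rw [sub_mulVec, dotProduct_sub, smul_mulVec, one_mulVec, dotProduct_smul,
        hy, dot_star_self, dot_star_self]
      push_cast
      simp only [smul_eq_mul]
      try ring
    rw [this]
    exact_mod_cast sub_nonneg.mpr hnorm

lemma eig_norm_sq_le {n₁ n₂ d : ℕ} (X1 : Fin d → Mat n₁) (X2 : Fin d → Mat n₂)
    (h2 : ∑ i, X2 i * (X2 i)ᴴ = (1 : Mat n₂))
    (lam : ℂ) (v : Fin n₁ × Fin n₂ → ℂ) (hv : v ≠ 0)
    (heig : (∑ i, conjM (X1 i) ⊗ₖ X2 i) *ᵥ v = lam • v) :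
    ‖lam‖ ^ 2 ≤ ‖∑ i, X1 i * (X1 i)ᴴ‖ := by
  by_contra hlt
  push_neg at hlt
  set c : ℝ := ‖∑ i, X1 i * (X1 i)ᴴ‖ with hc
  set L : ℝ := ‖lam‖ ^ 2 with hL
  have hc0 : 0 ≤ c := norm_nonneg _
  have hL0 : 0 < L := lt_of_le_of_lt hc0 hlt
  set V : Matrix (Fin n₂) (Fin n₁) ℂ := Matrix.of fun k i => v (i, k) with hV
  set P : Matrix (Fin n₂) (Fin n₂) ℂ := V * Vᴴ with hP
  set A : Matrix (Fin n₂) (Fin d × Fin n₁) ℂ := Matrix.of fun k p => (X2 p.1 * V) k p.2 with hA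
  set B : Matrix (Fin d × Fin n₁) (Fin n₁) ℂ := Matrix.of fun p l => star (X1 p.1 l p.2) with hB
  -- eigen equation in matrix form
  have hL1 : ∑ i, X2 i * V * (X1 i)ᴴ = lam • V := by
    ext k i
    have hh := congrFun heig (i, k)
    simp only [mulVec, dotProduct, Matrix.sum_apply, kroneckerMap_apply, conjM,
      Matrix.map_apply, Fintype.sum_prod_type, smul_eq_mul, Pi.smul_apply] at hh
    simp only [Matrix.sum_apply, Matrix.mul_apply, conjTranspose_apply, Matrix.smul_apply,
      hV, Matrix.of_apply, smul_eq_mul]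
    rw [← hh]
    simp only [Finset.sum_mul, Finset.mul_sum]
    rw [Finset.sum_comm]
    refine Finset.sum_congr rfl fun j _ => ?_
    rw [Finset.sum_comm]
    refine Finset.sum_congr rfl fun l _ => ?_
    refine Finset.sum_congr rfl fun i' _ => ?_
    simp only [Complex.star_def]
    ring
  have hAB : A * B = lam • V := by
    rw [← hL1]
    ext k l
    simp only [Matrix.mul_apply, Matrix.sum_apply, hA, hB, Matrix.of_apply,
      conjTranspose_apply, Fintype.sum_prod_type]
  have hAAH : A * Aᴴ = ∑ i, X2 i * P * (X2 i)ᴴ := by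
    have hterm : ∀ i, X2 i * P * (X2 i)ᴴ = (X2 i * V) * (X2 i * V)ᴴ := by
      intro i
      rw [conjTranspose_mul, hP, Matrix.mul_assoc, Matrix.mul_assoc, Matrix.mul_assoc]
    simp_rw [hterm]
    ext k k'
    simp only [Matrix.mul_apply, Matrix.sum_apply, hA, Matrix.of_apply,
      conjTranspose_apply, Fintype.sum_prod_type]
  have hBHB : Bᴴ * B = ∑ i, X1 i * (X1 i)ᴴ := by
    ext l m
    simp only [Matrix.mul_apply, Matrix.sum_apply, hB, Matrix.of_apply,
      conjTranspose_apply, Fintype.sum_prod_type, star_star]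
  have hBB : ‖B * Bᴴ‖ = c := by
    have e1 := Matrix.l2_opNorm_conjTranspose_mul_self Bᴴ
    rw [conjTranspose_conjTranspose] at e1
    have e2 := Matrix.l2_opNorm_conjTranspose_mul_self B
    have e3 := Matrix.l2_opNorm_conjTranspose B
    rw [hBHB] at e2
    rw [hc, e1, e3, e2]
  have hPSD1 : (((c : ℝ) : ℂ) • 1 - B * Bᴴ).PosSemidef := by
    rw [← hBB]; exact psd_norm_smul_one_sub B
  have hCS : ((c : ℂ) • (∑ i, X2 i * P * (X2 i)ᴴ) - ((L : ℝ) : ℂ) • P).PosSemidef := by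
    have h := hPSD1.mul_mul_conjTranspose_same A
    have heq : A * (((c : ℝ) : ℂ) • 1 - B * Bᴴ) * Aᴴ
        = (c : ℂ) • (∑ i, X2 i * P * (X2 i)ᴴ) - ((L : ℝ) : ℂ) • P := by
      rw [Matrix.mul_sub, Matrix.sub_mul, ← hAAH]
      congr 1
      · simp only [Matrix.mul_smul, Matrix.smul_mul, Matrix.mul_one]
      · have e4 : A * (B * Bᴴ) * Aᴴ = (A * B) * (A * B)ᴴ := by
          simp only [conjTranspose_mul, Matrix.mul_assoc]
        rw [e4, hAB, conjTranspose_smul, Matrix.smul_mul, Matrix.mul_smul, smul_smul, hP]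
        congr 1
        simp [Complex.star_def, Complex.mul_conj, Complex.normSq_eq_norm_sq, hL]
    rw [heq] at h
    exact h
  -- the CP map Ψ and its properties
  have hPsiPSD : ∀ {W : Mat n₂}, W.PosSemidef → (∑ i, X2 i * W * (X2 i)ᴴ).PosSemidef :=
    fun hW => psd_sum fun i => hW.mul_mul_conjTranspose_same _
  have hPsiAff : ∀ (a b : ℝ),
      (∑ i, X2 i * (((a : ℝ) : ℂ) • 1 - ((b : ℝ) : ℂ) • P) * (X2 i)ᴴ)
        = ((a : ℝ) : ℂ) • 1 - ((b : ℝ) : ℂ) • ∑ i, X2 i * P * (X2 i)ᴴ := by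
    intro a b
    have : ∀ i, X2 i * (((a : ℝ) : ℂ) • 1 - ((b : ℝ) : ℂ) • P) * (X2 i)ᴴ
        = ((a : ℝ) : ℂ) • (X2 i * (X2 i)ᴴ) - ((b : ℝ) : ℂ) • (X2 i * P * (X2 i)ᴴ) := by
      intro i
      simp only [Matrix.mul_sub, Matrix.sub_mul, Matrix.mul_smul, Matrix.smul_mul,
        Matrix.mul_one]
    simp_rw [this]
    rw [Finset.sum_sub_distrib, ← Finset.smul_sum, ← Finset.smul_sum, h2]
  set t : ℝ := ‖V * Vᴴ‖ with ht
  have hG : ∀ k : ℕ, (((c ^ k * t : ℝ) : ℂ) • 1 - ((L ^ k : ℝ) : ℂ) • P).PosSemidef := by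
    intro k
    induction k with
    | zero =>
      have := psd_norm_smul_one_sub V
      rw [← hP, ← ht] at this
      simpa using this
    | succ k ih =>
      have s1 := hPsiPSD ih
      rw [hPsiAff] at s1
      have s2 := psd_real_smul s1 hc0
      have s3 := psd_real_smul hCS (le_of_lt (pow_pos hL0 k))
      have s4 := s2.add s3
      have key : (c : ℂ) • (((c ^ k * t : ℝ) : ℂ) • 1
            - ((L ^ k : ℝ) : ℂ) • ∑ i, X2 i * P * (X2 i)ᴴ)
          + ((L ^ k : ℝ) : ℂ) • ((c : ℂ) • (∑ i, X2 i * P * (X2 i)ᴴ) - ((L : ℝ) : ℂ) • P)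
          = ((c ^ (k + 1) * t : ℝ) : ℂ) • 1 - ((L ^ (k + 1) : ℝ) : ℂ) • P := by
        push_cast
        module
      rw [key] at s4
      exact s4
  -- pick a nonzero coordinate
  have hex : ∃ p : Fin n₁ × Fin n₂, v p ≠ 0 := by
    by_contra hno
    push_neg at hno
    exact hv (funext fun p => hno p)
  obtain ⟨⟨i₀, k₀⟩, hv0⟩ := hex
  set pr : ℝ := ∑ i, ‖v (i, k₀)‖ ^ 2 with hpr
  have hPdiag : P k₀ k₀ = ((pr : ℝ) : ℂ) := by
    rw [hP, hpr]
    push_cast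
    simp only [Matrix.mul_apply, conjTranspose_apply, hV, Matrix.of_apply]
    refine Finset.sum_congr rfl fun i _ => ?_
    simp [Complex.star_def, mul_comm, Complex.mul_conj', Complex.sq_norm]
  have hpr0 : 0 < pr := by
    refine Finset.sum_pos' (fun i _ => by positivity) ⟨i₀, Finset.mem_univ _, ?_⟩
    exact pow_pos (norm_pos_iff.mpr hv0) 2
  -- the iterated inequality
  have hineq : ∀ k : ℕ, L ^ k * pr ≤ c ^ k * t := by
    intro k
    have hd := psd_diag_nonneg (hG k) k₀
    have : ((((c ^ k * t : ℝ) : ℂ)) • (1 : Mat n₂) - ((L ^ k : ℝ) : ℂ) • P) k₀ k₀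
        = (((c ^ k * t - L ^ k * pr : ℝ)) : ℂ) := by
      simp only [Matrix.sub_apply, Matrix.smul_apply, Matrix.one_apply_eq, hPdiag,
        smul_eq_mul, mul_one]
      push_cast
      ring
    rw [this] at hd
    have := (Complex.zero_le_real).mp hd
    linarith
  have htpr : pr ≤ t := by simpa using hineq 0
  have ht0 : 0 < t := lt_of_lt_of_le hpr0 htpr
  -- contradiction via geometric decay
  have hrat : c / L < 1 := (div_lt_one hL0).mpr hlt
  have hrat0 : 0 ≤ c / L := div_nonneg hc0 (le_of_lt hL0)
  have htend := tendsto_pow_atTop_nhds_zero_of_lt_one hrat0 hrat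
  have hev : ∀ᶠ k : ℕ in atTop, (c / L) ^ k < pr / t :=
    Filter.Tendsto.eventually_lt_const (div_pos hpr0 ht0) htend
  obtain ⟨k, hk⟩ := hev.exists
  rw [div_pow] at hk
  have h5 : c ^ k * t < pr * L ^ k := (div_lt_div_iff₀ (pow_pos hL0 k) ht0).mp hk
  have h6 := hineq k
  nlinarith

/-- If `X¹` is a strict row contraction of `n₁×n₁` matrices and `X²` is a
row co-isometry of `n₂×n₂` matrices generating all of `M_{n₂}(ℂ)` as a unital algebra, then
the spectral radius of `T = Σᵢ conj(X¹ᵢ) ⊗ X²ᵢ` is strictly less than `1`. -/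
theorem spectralRadius_mixed_lt_one {n₁ n₂ d : ℕ}
    (X1 : Fin d → Mat n₁) (X2 : Fin d → Mat n₂)
    (h1 : StrictRowContraction X1)
    (h2 : ∑ i, X2 i * (X2 i)ᴴ = (1 : Mat n₂))
    (halg : Algebra.adjoin ℂ (Set.range X2) = ⊤) :
    spectralRadius ℂ (∑ i, conjM (X1 i) ⊗ₖ X2 i) < 1 := by
  have h1' : ‖∑ i, X1 i * (X1 i)ᴴ‖ < 1 := h1
  have hc0 : (0:ℝ) ≤ ‖∑ i, X1 i * (X1 i)ᴴ‖ := norm_nonneg _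
  have hb : ∀ lam ∈ spectrum ℂ (∑ i, conjM (X1 i) ⊗ₖ X2 i),
      ‖lam‖ ≤ Real.sqrt ‖∑ i, X1 i * (X1 i)ᴴ‖ := by
    intro lam hlam
    rw [spectrum.mem_iff] at hlam
    have hdet : (algebraMap ℂ (Matrix (Fin n₁ × Fin n₂) (Fin n₁ × Fin n₂) ℂ) lam
        - ∑ i, conjM (X1 i) ⊗ₖ X2 i).det = 0 := by
      by_contra h
      exact hlam ((Matrix.isUnit_iff_isUnit_det _).2 (isUnit_iff_ne_zero.2 h))
    obtain ⟨v, hv0, hveq⟩ := (Matrix.exists_mulVec_eq_zero_iff).2 hdet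
    have heig : (∑ i, conjM (X1 i) ⊗ₖ X2 i) *ᵥ v = lam • v := by
      have e : (algebraMap ℂ (Matrix (Fin n₁ × Fin n₂) (Fin n₁ × Fin n₂) ℂ) lam) *ᵥ v
          = lam • v := by
        rw [Algebra.algebraMap_eq_smul_one, Matrix.smul_mulVec, Matrix.one_mulVec]
      rw [Matrix.sub_mulVec, e, sub_eq_zero] at hveq
      exact hveq.symm
    have hsq := eig_norm_sq_le X1 X2 h2 lam v hv0 heig
    calc ‖lam‖ = Real.sqrt (‖lam‖ ^ 2) := by rw [Real.sqrt_sq (norm_nonneg _)]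
      _ ≤ Real.sqrt ‖∑ i, X1 i * (X1 i)ᴴ‖ := Real.sqrt_le_sqrt hsq
  have hsc : Real.sqrt ‖∑ i, X1 i * (X1 i)ᴴ‖ < 1 := by
    rw [show (1:ℝ) = Real.sqrt 1 by simp]
    exact Real.sqrt_lt_sqrt hc0 h1'
  calc spectralRadius ℂ (∑ i, conjM (X1 i) ⊗ₖ X2 i)
      ≤ ENNReal.ofReal (Real.sqrt ‖∑ i, X1 i * (X1 i)ᴴ‖) := by
        refine iSup₂_le fun lam hlam => ?_
        rw [← enorm_eq_nnnorm, ← ofReal_norm]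
        exact ENNReal.ofReal_le_ofReal (hb lam hlam)
    _ < 1 := by
        rw [← ENNReal.ofReal_one]
        exact (ENNReal.ofReal_lt_ofReal_iff (by norm_num)).2 hsc
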